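/- As m → ∞, Γ(m, m+1) ~ (m/e)^m · sqrt(π/(2m)), i.e., lim_{m→∞} Γ(m,m+1)·(e/m)^m·sqrt(2m/π) = 1. -/

import Mathlib

open Finset Real Filter

open MeasureTheory Set Topology

/-- Incomplete gamma function at natural arguments. -/
noncomputable def incGamma (m : ℕ) (n : ℝ) : ℝ :=
  (Nat.factorial (m - 1) : ℝ) * Real.exp (-n) *
    ∑ i ∈ Finset.range m, n ^ i / (Nat.factorial i : ℝ)

lemma hasDeriv_sum (K : ℕ) (x : ℝ) :
    HasDerivAt (fun y : ℝ => ∑ i ∈ Finset.range (K+1), Real.exp (-y) * y ^ i / (Nat.factorial i : ℝ))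
      (-(Real.exp (-x) * x ^ K / (Nat.factorial K : ℝ))) x := by
  induction K with
  | zero =>
      simp only [Finset.sum_range_one, pow_zero, Nat.factorial_zero, Nat.cast_one, mul_one,
        div_one]
      simpa [Function.comp_def] using ((Real.hasDerivAt_exp (-x)).comp x ((hasDerivAt_id x).neg))
  | succ K ih =>
      have hexp : HasDerivAt (fun y : ℝ => Real.exp (-y)) (-Real.exp (-x)) x := by
        simpa [Function.comp_def] using ((Real.hasDerivAt_exp (-x)).comp x ((hasDerivAt_id x).neg))
      have hpow : HasDerivAt (fun y : ℝ => y ^ (K+1)) ((K+1 : ℕ) * x ^ K) x := hasDerivAt_pow _ _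
      have hterm : HasDerivAt (fun y : ℝ => Real.exp (-y) * y ^ (K+1) / (Nat.factorial (K+1) : ℝ))
          ((-Real.exp (-x) * x ^ (K+1) + Real.exp (-x) * ((K+1 : ℕ) * x ^ K)) / (Nat.factorial (K+1) : ℝ)) x :=
        (hexp.mul hpow).div_const _
      have := ih.add hterm
      have heq : -(Real.exp (-x) * x ^ K / (Nat.factorial K : ℝ)) +
          (-Real.exp (-x) * x ^ (K+1) + Real.exp (-x) * ((K+1 : ℕ) * x ^ K)) / (Nat.factorial (K+1) : ℝ)
          = -(Real.exp (-x) * x ^ (K+1) / (Nat.factorial (K+1) : ℝ)) := by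
        have h1 : (Nat.factorial (K+1) : ℝ) = (K+1 : ℝ) * (Nat.factorial K : ℝ) := by
          rw [Nat.factorial_succ]; push_cast; ring
        have h2 : (Nat.factorial K : ℝ) ≠ 0 := Nat.cast_ne_zero.2 (Nat.factorial_ne_zero K)
        have h3 : (K+1 : ℝ) ≠ 0 := by positivity
        rw [h1]; push_cast; field_simp; ring
      rw [heq] at this
      exact this.congr_of_eventuallyEq (Eventually.of_forall fun y => by
        simp [Finset.sum_range_succ])

lemma tendsto_sqrt_atTop : Tendsto Real.sqrt atTop atTop := by
  apply tendsto_atTop_atTop_of_monotone (fun a b hab => Real.sqrt_le_sqrt hab)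
  intro b
  exact ⟨(max b 0) ^ 2, by rw [Real.sqrt_sq (le_max_right b 0)]; exact le_max_left b 0⟩

lemma phi_tendsto {s : ℝ} (hs : 0 < s) :
    Tendsto (fun k : ℝ => k * Real.log (1 + s / Real.sqrt k) - Real.sqrt k * s)
      atTop (𝓝 (- s ^ 2 / 2)) := by
  have hdiff : Tendsto (fun k : ℝ =>
      (k * Real.log (1 + s / Real.sqrt k) - Real.sqrt k * s) - (- s ^ 2 / 2)) atTop (𝓝 0) := by
    have h0 : Tendsto (fun k : ℝ => 2 * s^3 / Real.sqrt k) atTop (𝓝 0) :=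
      Tendsto.div_atTop tendsto_const_nhds _root_.tendsto_sqrt_atTop
    refine squeeze_zero_norm' ?_ h0
    filter_upwards [eventually_ge_atTop (1 : ℝ), eventually_ge_atTop ((2*s)^2)] with k hk1 hk2
    have hk0 : (0:ℝ) < k := by linarith
    have hrk : 0 < Real.sqrt k := Real.sqrt_pos.2 hk0
    have hss : Real.sqrt k * Real.sqrt k = k := Real.mul_self_sqrt hk0.le
    have hrk2s : 2 * s ≤ Real.sqrt k := by
      calc 2*s = Real.sqrt ((2*s)^2) := (Real.sqrt_sq (by linarith)).symm
        _ ≤ Real.sqrt k := Real.sqrt_le_sqrt hk2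
    set u := s / Real.sqrt k with hu
    have hsu : s = Real.sqrt k * u := by rw [hu]; field_simp
    have hu0 : 0 < u := div_pos hs hrk
    have huh : u ≤ 1/2 := by
      rw [hu, div_le_iff₀ hrk]; nlinarith
    have habs : |(-u)| < 1 := by rw [abs_neg, abs_of_pos hu0]; linarith
    have h := Real.abs_log_sub_add_sum_range_le habs 2
    have hsum : ∑ i ∈ Finset.range 2, (-u) ^ (i+1) / ((i:ℝ)+1) = -u + u^2/2 := by
      norm_num [Finset.sum_range_succ]
    rw [hsum] at h
    have h1mu : Real.log (1 - -u) = Real.log (1 + u) := by norm_num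
    rw [h1mu, abs_neg, abs_of_pos hu0] at h
    -- h : |(-u + u^2/2) + log (1+u)| ≤ u^3/(1-u)
    have hub : u^3/(1-u) ≤ 2*u^3 := by
      rw [div_le_iff₀ (by linarith : (0:ℝ) < 1 - u)]
      nlinarith [mul_nonneg (pow_pos hu0 3).le (by linarith : (0:ℝ) ≤ 1 - 2*u)]
    have hks : Real.sqrt k * s = k * u := by rw [hsu, ← mul_assoc, hss]
    have hs2 : s ^ 2 = k * u ^ 2 := by rw [hsu, mul_pow, Real.sq_sqrt hk0.le]
    have target : k * Real.log (1 + u) - Real.sqrt k * s - (- s^2/2)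
        = k * ((-u + u^2/2) + Real.log (1+u)) := by
      rw [hks, hs2]; ring
    rw [target, norm_mul, Real.norm_eq_abs, Real.norm_eq_abs, abs_of_pos hk0]
    calc k * |(-u + u^2/2) + Real.log (1+u)| ≤ k * (2*u^3) :=
          mul_le_mul_of_nonneg_left (h.trans hub) hk0.le
      _ = 2 * s^3 / Real.sqrt k := by
          rw [eq_div_iff hrk.ne', hsu]
          linear_combination (-(2:ℝ)*s^3*Real.sqrt k*((Real.sqrt k)⁻¹)^3) * hss
  have := hdiff.add_const (- s ^ 2 / 2)
  simpa using this

lemma integrable_pow_exp (K : ℕ) {a : ℝ} (ha : 0 < a) :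
    IntegrableOn (fun t : ℝ => t ^ K * Real.exp (-t)) (Ioi a) := by
  have h := Real.GammaIntegral_convergent (s := (K+1 : ℝ)) (by positivity)
  have h2 : IntegrableOn (fun x : ℝ => Real.exp (-x) * x ^ ((K+1 : ℝ) - 1)) (Ioi a) :=
    h.mono_set (Ioi_subset_Ioi ha.le)
  refine h2.congr_fun (fun x hx => ?_) measurableSet_Ioi
  rw [show (K+1 : ℝ) - 1 = (K : ℝ) by ring]; dsimp only; rw [Real.rpow_natCast, mul_comm]

lemma integral_identity (K : ℕ) {a : ℝ} (ha : 0 < a) :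
    ∫ t in Ioi a, t ^ K * Real.exp (-t)
      = (Nat.factorial K : ℝ) * Real.exp (-a) * ∑ i ∈ Finset.range (K+1), a ^ i / (Nat.factorial i : ℝ) := by
  set F : ℝ → ℝ := fun y => -((Nat.factorial K : ℝ) *
    ∑ i ∈ Finset.range (K+1), Real.exp (-y) * y ^ i / (Nat.factorial i : ℝ)) with hF
  have hderiv : ∀ x ∈ Ici a, HasDerivAt F (x ^ K * Real.exp (-x)) x := by
    intro x _
    have := ((hasDeriv_sum K x).const_mul (Nat.factorial K : ℝ)).neg
    refine (this.congr_deriv ?_).congr_of_eventuallyEq (Eventually.of_forall fun y => rfl)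
    have h2 : (Nat.factorial K : ℝ) ≠ 0 := Nat.cast_ne_zero.2 (Nat.factorial_ne_zero K)
    field_simp
  have htend : Tendsto F atTop (𝓝 0) := by
    have : Tendsto (fun y : ℝ => ∑ i ∈ Finset.range (K+1),
        Real.exp (-y) * y ^ i / (Nat.factorial i : ℝ)) atTop (𝓝 0) := by
      have := tendsto_finset_sum (Finset.range (K+1))
        (fun i _ => ((tendsto_pow_mul_exp_neg_atTop_nhds_zero i).div_const (Nat.factorial i : ℝ)))
      simpa [mul_comm] using this
    have := (this.const_mul (Nat.factorial K : ℝ)).neg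
    simpa using this
  have := integral_Ioi_of_hasDerivAt_of_tendsto' hderiv (integrable_pow_exp K ha) htend
  rw [this, hF]
  simp only [zero_sub, neg_neg, Finset.mul_sum]
  exact Finset.sum_congr rfl (fun i _ => by ring)

lemma phi_bound {k s : ℝ} (hk : 1 ≤ k) (hs : 0 < s) :
    k * Real.log (1 + s / Real.sqrt k) - Real.sqrt k * s ≤ 1 - s / 8 := by
  have hk0 : (0:ℝ) < k := by linarith
  have hrk : 0 < Real.sqrt k := Real.sqrt_pos.2 hk0
  have hss : Real.sqrt k * Real.sqrt k = k := Real.mul_self_sqrt hk0.le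
  have hrk1 : 1 ≤ Real.sqrt k := by nlinarith [Real.sqrt_nonneg k]
  set u := s / Real.sqrt k with hu
  have hu0 : 0 < u := div_pos hs hrk
  have hsu : s = Real.sqrt k * u := by rw [hu]; field_simp
  have hus : u ≤ s := by nlinarith
  set r := Real.sqrt (1 + u) with hr
  have hr2 : r ^ 2 = 1 + u := Real.sq_sqrt (by linarith)
  have hr1 : 1 ≤ r := by nlinarith [Real.sqrt_nonneg (1 + u)]
  have hlog : Real.log (1 + u) = 2 * Real.log r := by
    rw [← hr2, Real.log_pow]; push_cast; ring
  have hlr : Real.log r ≤ r - 1 := Real.log_le_sub_one_of_pos (by linarith)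
  have hks : Real.sqrt k * s = k * u := by rw [hsu, ← mul_assoc, hss]
  have hs2 : s ^ 2 = k * u ^ 2 := by rw [hsu, mul_pow, Real.sq_sqrt hk0.le]
  have hrs : (r + 1) ^ 2 ≤ 2 * s + 4 := by nlinarith
  have key : k * Real.log (1 + u) - Real.sqrt k * s ≤ - s ^ 2 / (2 * (s + 2)) := by
    have h1 : k * Real.log (1 + u) - Real.sqrt k * s ≤ k * (2 * (r - 1) - u) := by
      rw [hlog, hks]; nlinarith
    have h2 : 2 * (r - 1) - u ≤ - u ^ 2 / (2 * (s + 2)) := by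
      have hu' : u = r ^ 2 - 1 := by linarith
      rw [le_div_iff₀ (by linarith : (0:ℝ) < 2 * (s + 2))]
      nlinarith [sq_nonneg (r - 1), sq_nonneg ((r-1)*(r+1))]
    calc k * Real.log (1 + u) - Real.sqrt k * s ≤ k * (2 * (r - 1) - u) := h1
      _ ≤ k * (- u ^ 2 / (2 * (s + 2))) := mul_le_mul_of_nonneg_left h2 hk0.le
      _ = - s ^ 2 / (2 * (s + 2)) := by rw [hs2]; ring
  have final : - s ^ 2 / (2 * (s + 2)) ≤ 1 - s / 8 := by
    rw [div_le_iff₀ (by linarith : (0:ℝ) < 2 * (s + 2))]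
    nlinarith
  linarith

noncomputable def hker (k : ℝ) (s : ℝ) : ℝ :=
  Real.exp (k * Real.log (1 + s / Real.sqrt k) - Real.sqrt k * s)

lemma hker_meas (k : ℝ) : Measurable (hker k) := by
  apply Real.measurable_exp.comp
  exact ((Real.measurable_log.comp ((measurable_id.div_const _).const_add 1)).const_mul k).sub
    (measurable_id.const_mul _)

lemma J_tendsto :
    Tendsto (fun n : ℕ => ∫ s in Ioi (2 / Real.sqrt ((n:ℝ)+1)), hker ((n:ℝ)+1) s)
      atTop (𝓝 (Real.sqrt (π/2))) := by
  have hmain : Tendsto (fun n : ℕ => ∫ s in Ioi (0:ℝ),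
      (Ioi (2 / Real.sqrt ((n:ℝ)+1))).indicator (hker ((n:ℝ)+1)) s)
      atTop (𝓝 (∫ s in Ioi (0:ℝ), Real.exp (- s^2/2))) := by
    apply tendsto_integral_of_dominated_convergence (fun s => Real.exp (1 - s/8))
    · intro n
      exact ((hker_meas _).indicator measurableSet_Ioi).aestronglyMeasurable
    · have h1 : IntegrableOn (fun s : ℝ => Real.exp (-(1/8) * s)) (Ioi 0) :=
        exp_neg_integrableOn_Ioi 0 (by norm_num)
      have h2 := h1.const_mul (Real.exp 1)
      refine (IntegrableOn.congr_fun (h2 : IntegrableOn _ _ _) (fun s _ => ?_) measurableSet_Ioi : IntegrableOn _ _ _)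
      rw [← Real.exp_add]
      congr 1
      ring
    · intro n
      rw [ae_restrict_iff' measurableSet_Ioi]
      filter_upwards with s hs
      by_cases hmem : s ∈ Ioi (2 / Real.sqrt ((n:ℝ)+1))
      · rw [indicator_of_mem hmem]
        unfold hker
        rw [Real.norm_eq_abs, abs_of_pos (Real.exp_pos _), Real.exp_le_exp]
        exact phi_bound (by linarith [Nat.cast_nonneg (α := ℝ) n]) hs
      · rw [indicator_of_notMem hmem, norm_zero]
        positivity
    · rw [ae_restrict_iff' measurableSet_Ioi]
      filter_upwards with s hs
      have hcomp : Tendsto (fun n : ℕ => ((n:ℝ)+1) * Real.log (1 + s / Real.sqrt ((n:ℝ)+1))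
          - Real.sqrt ((n:ℝ)+1) * s) atTop (𝓝 (- s^2/2)) :=
        (phi_tendsto hs).comp (tendsto_atTop_add_const_right atTop 1 tendsto_natCast_atTop_atTop)
      have hexp : Tendsto (fun n : ℕ => hker ((n:ℝ)+1) s) atTop (𝓝 (Real.exp (- s^2/2))) :=
        (Real.continuous_exp.continuousAt.tendsto).comp hcomp
      refine Tendsto.congr' ?_ hexp
      have hlim : Tendsto (fun n : ℕ => 2 / Real.sqrt ((n:ℝ)+1)) atTop (𝓝 0) := by
        apply Tendsto.div_atTop tendsto_const_nhds
        exact _root_.tendsto_sqrt_atTop.comp (tendsto_atTop_add_const_right atTop 1 tendsto_natCast_atTop_atTop)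
      filter_upwards [hlim.eventually_lt_const hs] with n hn
      exact (indicator_of_mem (by exact hn) _).symm
  have hval : ∫ s in Ioi (0:ℝ), Real.exp (- s^2/2) = Real.sqrt (π/2) := by
    simp_rw [show ∀ s:ℝ, -s^2/2 = -(1/2)*s^2 from fun s => by ring]
    rw [integral_gaussian_Ioi, show π/(1/2) = 2^2*(π/2) by ring,
      Real.sqrt_mul (by positivity) (π/2), Real.sqrt_sq (by norm_num)]
    ring
  rw [hval] at hmain
  refine hmain.congr fun n => ?_
  have ha : (0:ℝ) < 2 / Real.sqrt ((n:ℝ)+1) := by positivity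
  rw [integral_indicator measurableSet_Ioi, Measure.restrict_restrict measurableSet_Ioi,
    Ioi_inter_Ioi, sup_eq_left.mpr ha.le]

lemma change_var (K : ℕ) (hK : 1 ≤ K) :
    ∫ t in Ioi ((K:ℝ)+2), t ^ K * Real.exp (-t)
      = Real.sqrt K * ((K:ℝ)^K * Real.exp (-(K:ℝ)) *
          ∫ s in Ioi (2 / Real.sqrt K), hker (K:ℝ) s) := by
  have hK0 : (0:ℝ) < K := by exact_mod_cast hK
  have hrk : 0 < Real.sqrt K := Real.sqrt_pos.2 hK0
  have hss : Real.sqrt K * Real.sqrt K = (K:ℝ) := Real.mul_self_sqrt hK0.le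
  set g : ℝ → ℝ := fun t => t ^ K * Real.exp (-t) with hg
  have step1 : ∫ x in Ioi (2:ℝ), g (x + (K:ℝ)) = ∫ t in Ioi ((K:ℝ)+2), g t := by
    have A : MeasurableEmbedding (fun x : ℝ => x + (K:ℝ)) :=
      (Homeomorph.addRight (K:ℝ)).isClosedEmbedding.measurableEmbedding
    have h := A.setIntegral_map (μ := volume) g (Ioi ((K:ℝ)+2))
    rw [map_add_right_eq_self volume (K:ℝ)] at h
    have hpre : (fun x : ℝ => x + (K:ℝ)) ⁻¹' (Ioi ((K:ℝ)+2)) = Ioi (2:ℝ) := by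
      ext x
      simp only [Set.mem_preimage, Set.mem_Ioi]
      constructor <;> intro <;> linarith
    rw [hpre] at h
    exact h.symm
  have step2 : ∫ x in Ioi (2:ℝ), g (x + (K:ℝ))
      = Real.sqrt K * ∫ s in Ioi (2 / Real.sqrt K), g (Real.sqrt K * s + (K:ℝ)) := by
    have h := integral_comp_mul_left_Ioi (fun x => g (x + (K:ℝ))) (2 / Real.sqrt K) hrk
    rw [show Real.sqrt K * (2 / Real.sqrt K) = 2 by field_simp] at h
    rw [h, smul_eq_mul, ← mul_assoc, mul_inv_cancel₀ hrk.ne', one_mul]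
  have step3 : ∀ s ∈ Ioi (2 / Real.sqrt K),
      g (Real.sqrt K * s + (K:ℝ)) = (K:ℝ)^K * Real.exp (-(K:ℝ)) * hker (K:ℝ) s := by
    intro s hs
    have hs0 : 0 < s := lt_trans (by positivity) hs
    have hpos : (0:ℝ) < 1 + s / Real.sqrt K := by positivity
    have h1 : Real.sqrt K * s + (K:ℝ) = (K:ℝ) * (1 + s / Real.sqrt K) := by
      field_simp
      linear_combination s * hss
    have h2 : ((1:ℝ) + s / Real.sqrt K) ^ K = Real.exp ((K:ℝ) * Real.log (1 + s / Real.sqrt K)) := by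
      rw [Real.exp_nat_mul, Real.exp_log hpos]
    have h3 : (Real.sqrt K * s + (K:ℝ)) ^ K
        = (K:ℝ)^K * Real.exp ((K:ℝ) * Real.log (1 + s / Real.sqrt K)) := by
      rw [h1, mul_pow, h2]
    have h4 : Real.exp (-(Real.sqrt K * s + (K:ℝ)))
        = Real.exp (-(Real.sqrt K * s)) * Real.exp (-(K:ℝ)) := by
      rw [← Real.exp_add]; congr 1; ring
    have h5 : hker (K:ℝ) s = Real.exp ((K:ℝ) * Real.log (1 + s / Real.sqrt K))
        * Real.exp (-(Real.sqrt K * s)) := by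
      unfold hker
      rw [sub_eq_add_neg, Real.exp_add]
    rw [hg]
    simp only
    rw [h3, h4, h5]
    ring
  have step4 : ∫ s in Ioi (2 / Real.sqrt K), g (Real.sqrt K * s + (K:ℝ))
      = (K:ℝ)^K * Real.exp (-(K:ℝ)) * ∫ s in Ioi (2 / Real.sqrt K), hker (K:ℝ) s := by
    rw [setIntegral_congr_fun measurableSet_Ioi step3, MeasureTheory.integral_const_mul]
  rw [← step1, step2, step4]

lemma alg (N J a b c E F : ℝ) (k : ℕ) (hN : 0 < N) (hab : a * b = c * (N+1)) (hEF : E * F^(k+2) = F) :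
    a * (N^(k+1) * E * J) * (F/(N+1))^(k+2) * b = J * (F * (N/(N+1))^(k+1)) * c := by
  have h1 : (N+1) ≠ 0 := by positivity
  have h2 : ((N+1):ℝ)^(k+1) ≠ 0 := pow_ne_zero _ h1
  rw [div_pow, div_pow, pow_succ (N+1) (k+1)]
  calc a * (N^(k+1) * E * J) * (F^(k+2)/((N+1)^(k+1)*(N+1))) * b
      = (a*b) * (E*F^(k+2)) * N^(k+1) * J / ((N+1)^(k+1)*(N+1)) := by ring
    _ = (c*(N+1)) * F * N^(k+1) * J / ((N+1)^(k+1)*(N+1)) := by rw [hab, hEF]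
    _ = J * (F * (N^(k+1)/(N+1)^(k+1))) * c := by field_simp

theorem incGamma_asymptotic :
    Tendsto
      (fun m : ℕ =>
        incGamma m ((m : ℝ) + 1) * (Real.exp 1 / (m : ℝ)) ^ m *
          Real.sqrt (2 * (m : ℝ) / Real.pi))
      atTop (nhds 1) := by
  rw [← Filter.tendsto_add_atTop_iff_nat 2]
  have L1 := J_tendsto
  have L2 : Tendsto (fun k : ℕ => Real.exp 1 * (((k:ℝ)+1)/((k:ℝ)+1+1))^(k+1)) atTop (𝓝 1) := by
    have base := Real.tendsto_one_add_div_pow_exp 1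
    have shifted := base.comp (tendsto_add_atTop_nat 1)
    have hinv := (Tendsto.inv₀ shifted (Real.exp_ne_zero 1)).const_mul (Real.exp 1)
    rw [mul_inv_cancel₀ (Real.exp_ne_zero 1)] at hinv
    refine hinv.congr fun k => ?_
    simp only [Function.comp_apply]
    have h : (1:ℝ) + 1/((k+1:ℕ):ℝ) = (((k:ℝ)+1)+1)/((k:ℝ)+1) := by
      push_cast
      field_simp
    rw [h, ← inv_pow, inv_div]
  have L3 : Tendsto (fun k : ℕ => Real.sqrt (2*((k:ℝ)+1)/(π*((k:ℝ)+1+1)))) atTop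
      (𝓝 (Real.sqrt (2/π))) := by
    have h0 : Tendsto (fun k : ℕ => 1/((k:ℝ)+2)) atTop (𝓝 0) := by
      have := (tendsto_one_div_add_atTop_nhds_zero_nat (𝕜 := ℝ)).comp (tendsto_add_atTop_nat 1)
      refine this.congr fun k => ?_
      simp only [Function.comp_apply]
      push_cast
      ring_nf
    have hquot : Tendsto (fun k : ℕ => ((k:ℝ)+1)/((k:ℝ)+1+1)) atTop (𝓝 1) := by
      have := (tendsto_const_nhds (x := (1:ℝ)) (f := atTop (α := ℕ))).sub h0
      rw [sub_zero] at this
      refine this.congr fun k => ?_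
      field_simp
      ring
    have hinner : Tendsto (fun k : ℕ => 2*((k:ℝ)+1)/(π*((k:ℝ)+1+1))) atTop (𝓝 (2/π)) := by
      have := hquot.const_mul (2/π)
      rw [mul_one] at this
      refine this.congr fun k => ?_
      field_simp
    exact (Real.continuous_sqrt.continuousAt.tendsto).comp hinner
  have hprod := (L1.mul L2).mul L3
  have hone : Real.sqrt (π/2) * 1 * Real.sqrt (2/π) = 1 := by
    rw [mul_one, ← Real.sqrt_mul (by positivity) (2/π),
      show (π/2) * (2/π) = 1 by field_simp, Real.sqrt_one]
  rw [hone] at hprod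
  refine hprod.congr fun k => ?_
  -- per-k equality
  have hN0 : (0:ℝ) < (k:ℝ)+1 := by positivity
  have e1 : incGamma (k+2) (((k+2:ℕ):ℝ)+1) = ∫ t in Ioi (((k:ℝ)+1)+2), t^(k+1) * Real.exp (-t) := by
    rw [integral_identity (k+1) (show (0:ℝ) < ((k:ℝ)+1)+2 by positivity)]
    unfold incGamma
    have h21 : k+2-1 = k+1 := rfl
    rw [h21]
    push_cast
    ring_nf
  have e2 : ∫ t in Ioi (((k:ℝ)+1)+2), t^(k+1) * Real.exp (-t)
      = Real.sqrt ((k:ℝ)+1) * (((k:ℝ)+1)^(k+1) * Real.exp (-((k:ℝ)+1)) *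
          ∫ s in Ioi (2 / Real.sqrt ((k:ℝ)+1)), hker ((k:ℝ)+1) s) := by
    have h := change_var (k+1) (Nat.succ_le_succ (Nat.zero_le k))
    push_cast at h
    exact h
  have e3 : (Real.exp 1/((k+2:ℕ):ℝ))^(k+2) = (Real.exp 1/(((k:ℝ)+1)+1))^(k+2) := by
    push_cast; ring_nf
  have e4 : Real.sqrt (2*((k+2:ℕ):ℝ)/π) = Real.sqrt (2*(((k:ℝ)+1)+1)/π) := by
    congr 1; push_cast; ring
  have hexp : Real.exp (-((k:ℝ)+1)) * Real.exp 1 ^ (k+2) = Real.exp 1 := by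
    rw [← Real.exp_nat_mul, ← Real.exp_add]
    congr 1
    push_cast
    ring
  have hsq : Real.sqrt ((k:ℝ)+1) * Real.sqrt (2*(((k:ℝ)+1)+1)/π)
      = Real.sqrt (2*((k:ℝ)+1)/(π*(((k:ℝ)+1)+1))) * (((k:ℝ)+1)+1) := by
    have h2 : Real.sqrt (2*((k:ℝ)+1)/(π*(((k:ℝ)+1)+1))) * (((k:ℝ)+1)+1)
        = Real.sqrt (2*((k:ℝ)+1)/(π*(((k:ℝ)+1)+1)) * (((k:ℝ)+1)+1)^2) := by
      rw [Real.sqrt_mul (by positivity) ((((k:ℝ)+1)+1)^2), Real.sqrt_sq (by positivity)]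
    rw [h2, ← Real.sqrt_mul (by positivity)]
    congr 1
    have hpi := Real.pi_ne_zero
    field_simp
  calc (∫ s in Ioi (2 / Real.sqrt ((k:ℝ)+1)), hker ((k:ℝ)+1) s) *
        (Real.exp 1 * (((k:ℝ)+1)/((k:ℝ)+1+1))^(k+1)) * Real.sqrt (2*((k:ℝ)+1)/(π*((k:ℝ)+1+1)))
      = Real.sqrt ((k:ℝ)+1) * (((k:ℝ)+1)^(k+1) * Real.exp (-((k:ℝ)+1)) *
          (∫ s in Ioi (2 / Real.sqrt ((k:ℝ)+1)), hker ((k:ℝ)+1) s)) *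
        (Real.exp 1/(((k:ℝ)+1)+1))^(k+2) * Real.sqrt (2*(((k:ℝ)+1)+1)/π) :=
        (alg ((k:ℝ)+1) _ _ _ _ _ _ k hN0 hsq hexp).symm
    _ = incGamma (k+2) (((k+2:ℕ):ℝ)+1) * (Real.exp 1/((k+2:ℕ):ℝ))^(k+2) *
          Real.sqrt (2*((k+2:ℕ):ℝ)/π) := by rw [e1, e2, e3, e4]
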